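/- Let g ≠ 0, κ, γ > 0, d ∈ (−1,1) and suppose C_b = g² d/(κγ) > 1. A quadruple (r, S_R, S_I, D_R) ∈ ℝ⁴ with r > 0 satisfies the equilibrium equations −κ r + g S_R = 0, −γ S_R + g r (D_R + d) + g S_I²/r = 0, −γ S_I − g S_I S_R / r = 0, −2γ D_R − 4 g r S_R = 0 if and only if r = r₀ := γ√(C_b − 1)/(√2 |g|), S_R = κ r₀ / g, S_I = 0 and D_R = d(1/C_b − 1). -/

import Mathlib

set_option maxHeartbeats 1600000 in
/-- **The nonzero equilibrium of the polar-coordinate Maxwell–Bloch system.**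
For `C_b = g²d/(κγ) > 1`, a quadruple `(r, S_R, S_I, D_R)` with `r > 0` solves the
equilibrium equations iff `r = r₀ = γ√(C_b−1)/(√2|g|)`, `S_R = κr₀/g`, `S_I = 0`
and `D_R = d(1/C_b − 1)`. -/
theorem maxwell_bloch_polar_equilibrium
    (g κ γ d : ℝ) (hg : g ≠ 0) (hκ : 0 < κ) (hγ : 0 < γ)
    (hd : -1 < d ∧ d < 1)
    (hCb : 1 < g ^ 2 * d / (κ * γ))
    (r SR SI DR : ℝ) (hr : 0 < r) :
    (-κ * r + g * SR = 0 ∧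
      -γ * SR + g * r * (DR + d) + g * SI ^ 2 / r = 0 ∧
      -γ * SI - g * SI * SR / r = 0 ∧
      -2 * γ * DR - 4 * g * r * SR = 0) ↔
    (r = γ * Real.sqrt (g ^ 2 * d / (κ * γ) - 1) / (Real.sqrt 2 * |g|) ∧
      SR = κ * (γ * Real.sqrt (g ^ 2 * d / (κ * γ) - 1) / (Real.sqrt 2 * |g|)) / g ∧
      SI = 0 ∧
      DR = d * (1 / (g ^ 2 * d / (κ * γ)) - 1)) := by
  obtain ⟨hd1, hd2⟩ := hd
  have hκγ : 0 < κ * γ := mul_pos hκ hγ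
  have hg2 : 0 < g ^ 2 := by positivity
  set C := g ^ 2 * d / (κ * γ) with hCdef
  have hdpos : 0 < d := by
    rcases le_or_gt d 0 with h | h
    · exfalso
      have h1 : g ^ 2 * d ≤ 0 := mul_nonpos_of_nonneg_of_nonpos hg2.le h
      have : C ≤ 0 := div_nonpos_of_nonpos_of_nonneg h1 hκγ.le
      linarith
    · exact h
  have hC0 : 0 < C - 1 := by linarith
  have hs : Real.sqrt (C - 1) ^ 2 = C - 1 := Real.sq_sqrt hC0.le
  have hspos : 0 < Real.sqrt (C - 1) := Real.sqrt_pos.mpr hC0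
  have ht : Real.sqrt 2 ^ 2 = 2 := Real.sq_sqrt (by norm_num)
  have htpos : 0 < Real.sqrt 2 := Real.sqrt_pos.mpr (by norm_num)
  have hag : 0 < |g| := abs_pos.mpr hg
  set r0 := γ * Real.sqrt (C - 1) / (Real.sqrt 2 * |g|) with hr0def
  have hr0pos : 0 < r0 := by positivity
  have hr0sq : r0 ^ 2 = γ ^ 2 * (C - 1) / (2 * g ^ 2) := by
    rw [hr0def, div_pow, mul_pow, mul_pow, hs, ht, sq_abs]
  have hCval : C * (κ * γ) = g ^ 2 * d := by
    rw [hCdef]; field_simp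
  clear hr0def
  clear_value r0 C
  constructor
  · rintro ⟨h1, h2, h3, h4⟩
    have hSR : g * SR = κ * r := by linarith
    have hSI : SI = 0 := by
      have h3' : -γ * SI * r - g * SI * SR = 0 := by
        have := congrArg (· * r) h3
        field_simp at this
        linarith
      have hz : SI * (r * (γ + κ)) = 0 := by
        linear_combination -h3' - SI * hSR
      rcases mul_eq_zero.mp hz with h | h
      · exact h
      · exfalso; nlinarith
    subst hSI
    have h2' : -γ * SR + g * r * (DR + d) = 0 := by
      have : g * (0:ℝ) ^ 2 / r = 0 := by simp
      linarith [h2, this]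
    have hDR : DR = γ * κ / g ^ 2 - d := by
      have key : g ^ 2 * r * (DR + d) = γ * κ * r := by
        linear_combination g * h2' + γ * hSR
      have : g ^ 2 * (DR + d) = γ * κ := by
        have hr' : r ≠ 0 := ne_of_gt hr
        field_simp at key ⊢
        nlinarith [key]
      field_simp
      linarith
    have hrsq : r ^ 2 = r0 ^ 2 := by
      have h4' : γ * DR = -2 * κ * r ^ 2 := by
        linear_combination -h4 / 2 - 2 * r * hSR
      rw [hDR] at h4'
      have h4'' : γ * (γ * κ / g ^ 2 - d) = -2 * κ * r ^ 2 := h4'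
      have h4''' : γ * (γ * κ - g ^ 2 * d) = -2 * κ * r ^ 2 * g ^ 2 := by
        field_simp at h4''
        linarith
      have key : r ^ 2 * (2 * g ^ 2) * κ = γ ^ 2 * (C - 1) * κ := by
        linear_combination h4''' - γ * hCval
      have key2 : r ^ 2 * (2 * g ^ 2) = γ ^ 2 * (C - 1) :=
        mul_right_cancel₀ hκ.ne' key
      rw [hr0sq, eq_div_iff (by positivity)]
      linarith [key2]
    have hreq : r = r0 := by
      have : (r - r0) * (r + r0) = 0 := by linear_combination hrsq
      rcases mul_eq_zero.mp this with h | h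
      · linarith
      · linarith
    refine ⟨hreq, ?_, rfl, ?_⟩
    · rw [← hreq]
      field_simp
      linarith [hSR]
    · rw [hDR]
      have hdne : d ≠ 0 := ne_of_gt hdpos
      rw [hCdef]
      field_simp
  · rintro ⟨rfl, rfl, rfl, rfl⟩
    have hdC : d * (1 / C - 1) = κ * γ / g ^ 2 - d := by
      have hdne : d ≠ 0 := ne_of_gt hdpos
      rw [hCdef]; field_simp
    refine ⟨by field_simp; ring, ?_, by simp, ?_⟩
    · rw [hdC]
      have : g * (0:ℝ) ^ 2 / r = 0 := by simp
      rw [this]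
      field_simp
      ring
    · rw [hdC]
      have : -2 * γ * (κ * γ / g ^ 2 - d) - 4 * g * r * (κ * r / g) = 0 := by
        have h4 : 4 * g * r * (κ * r / g) = 4 * κ * r ^ 2 := by
          field_simp
        rw [h4, hr0sq]
        field_simp
        linear_combination (-4 * γ) * hCval
      exact this
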